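/- Let G be a countable discrete FC-group (every conjugacy class of G is finite) and let m ∈ ℕ. For any finite partition G^m = C₁ ∪ … ∪ C_r, there exists j such that the set { g ∈ G : ∃ (x₁, …, x_m) ∈ G^m, {(x₁,…,x_m), (x₁g, x₂, …, x_m), (x₁g, x₂g, x₃, …, x_m), …, (x₁g, x₂g, …, x_mg)} ⊆ C_j } is left IP*. -/

import Mathlib

/-- The product of `x_n` over `F` with indices taken in decreasing order. -/
def prodDec {G : Type*} [Group G] (F : Finset ℕ) (x : ℕ → G) : G :=
  ((F.sort (· ≤ ·)).reverse.map x).prod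

/-- The left finite product set of a sequence `(x_n)` in `G`. -/
def FPL {G : Type*} [Group G] (x : ℕ → G) : Set G :=
  { g | ∃ F : Finset ℕ, F.Nonempty ∧ g = prodDec F x }

/-- `X` is left IP*: it meets every `FP_L(x_n)`. -/
def leftIPStar {G : Type*} [Group G] (X : Set G) : Prop :=
  ∀ x : ℕ → G, (X ∩ FPL x).Nonempty

/-- The `i`-th point of the right corner configuration in `G^m`:
the first `i` coordinates of `x` are multiplied by `g` on the right. -/
def cornerPt {G : Type*} [Group G] {m : ℕ} (x : Fin m → G) (g : G) (i : ℕ) : Fin m → G :=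
  fun t => if (t : ℕ) < i then x t * g else x t

section prodDec
variable {G : Type*} [Group G] (x : ℕ → G)

lemma sort_union_of_lt {F₁ F₂ : Finset ℕ} (h : ∀ i ∈ F₁, ∀ j ∈ F₂, i < j) :
    (F₁ ∪ F₂).sort (· ≤ ·) = F₁.sort (· ≤ ·) ++ F₂.sort (· ≤ ·) := by
  have hnd : (F₁.sort (· ≤ ·) ++ F₂.sort (· ≤ ·)).Nodup := by
    refine (Finset.sort_nodup _ _).append (Finset.sort_nodup _ _) ?_
    intro a ha hb
    rw [Finset.mem_sort] at ha hb
    exact lt_irrefl a (h a ha a hb)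
  refine (fun hp hs => List.Perm.eq_of_pairwise' (Finset.pairwise_sort _ _) hs hp) ?_ ?_
  · rw [List.perm_ext_iff_of_nodup (Finset.sort_nodup _ _) hnd]
    intro a
    simp only [List.mem_append, Finset.mem_sort, Finset.mem_union]
  · refine List.pairwise_append.mpr ⟨Finset.pairwise_sort _ _, Finset.pairwise_sort _ _, ?_⟩
    intro a ha b hb
    rw [Finset.mem_sort] at ha hb
    exact (h a ha b hb).le

lemma prodDec_union {F₁ F₂ : Finset ℕ} (h : ∀ i ∈ F₁, ∀ j ∈ F₂, i < j) :
    prodDec (F₁ ∪ F₂) x = prodDec F₂ x * prodDec F₁ x := by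
  unfold prodDec
  rw [sort_union_of_lt h, List.reverse_append, List.map_append, List.prod_append]

lemma prodDec_singleton (n : ℕ) : prodDec {n} x = x n := by
  simp [prodDec, Finset.sort_singleton]

lemma prodDec_insert_max {F : Finset ℕ} {n : ℕ} (h : ∀ a ∈ F, a < n) :
    prodDec (insert n F) x = x n * prodDec F x := by
  have : insert n F = F ∪ {n} := by
    rw [Finset.union_comm, ← Finset.insert_eq]
  rw [this, prodDec_union x (by simpa using h), prodDec_singleton]

lemma prodDec_Ico_split {s a b : ℕ} (h1 : s ≤ a) (h2 : a ≤ b) :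
    prodDec (Finset.Ico s b) x = prodDec (Finset.Ico a b) x * prodDec (Finset.Ico s a) x := by
  rw [← Finset.Ico_union_Ico_eq_Ico h1 h2, prodDec_union]
  intro i hi j hj
  rw [Finset.mem_Ico] at hi hj
  omega
lemma prodDec_empty' {G : Type*} [Group G] (x : ℕ → G) : prodDec ∅ x = 1 := by
  simp [prodDec]
end prodDec

section extraction
variable {G : Type*} [Group G]

lemma blockStep (hFC : ∀ g : G, (Set.range fun x : G => x * g * x⁻¹).Finite)
    (y : ℕ → G) (Z : Finset G) (s : ℕ) :
    ∃ a b : ℕ, s ≤ a ∧ a < b ∧ ∀ z ∈ Z, Commute (prodDec (Finset.Ico a b) y) z := by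
  classical
  set p : ℕ → G := fun n => prodDec (Finset.Ico s n) y with hp
  set f : ℕ → (Z → G) := fun n z => (p n)⁻¹ * z.1 * (p n) with hf
  have hmaps : Set.MapsTo f (Set.Ici s)
      (Set.pi Set.univ fun z : Z => Set.range fun x : G => x * z.1 * x⁻¹) := by
    intro n _ z _
    exact ⟨(p n)⁻¹, by simp [hf, mul_assoc]⟩
  have hfin : (Set.pi Set.univ fun z : Z => Set.range fun x : G => x * z.1 * x⁻¹).Finite :=
    Set.Finite.pi fun z => hFC z.1
  obtain ⟨n₁, hn₁, n₂, hn₂, hne, hfe⟩ :=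
    (Set.Ici_infinite s).exists_ne_map_eq_of_mapsTo hmaps hfin
  have key : ∀ a b : ℕ, s ≤ a → s ≤ b → a < b → f a = f b →
      ∃ a' b' : ℕ, s ≤ a' ∧ a' < b' ∧ ∀ z ∈ Z, Commute (prodDec (Finset.Ico a' b') y) z := by
    intro a b hsa hsb hab hfeq
    refine ⟨a, b, hsa, hab, ?_⟩
    intro z hz
    have eq1 : (p a)⁻¹ * z * p a = (p b)⁻¹ * z * p b := congrFun hfeq ⟨z, hz⟩
    have eq2 : prodDec (Finset.Ico a b) y = p b * (p a)⁻¹ := by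
      rw [hp]
      simp only []
      rw [prodDec_Ico_split y hsa hab.le]
      group
    have e3 : z * p b * (p a)⁻¹ = p b * (p a)⁻¹ * z := by
      have := congrArg (fun w => p b * w * (p a)⁻¹) eq1
      simp only [mul_assoc, inv_mul_cancel_left, mul_inv_cancel_left,
        mul_inv_cancel, inv_mul_cancel, mul_one, one_mul] at this ⊢
      rw [← this]
    rw [eq2, Commute, SemiconjBy]
    rw [← e3]
    simp [mul_assoc]
  rcases hne.lt_or_gt with h | h
  · exact key n₁ n₂ hn₁ hn₂ h hfe
  · exact key n₂ n₁ hn₂ hn₁ h hfe.symm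
end extraction

section extraction
variable {G : Type*} [Group G]

private lemma le_foldr_max {x : ℕ} : ∀ {l : List ℕ}, x ∈ l → x ≤ l.foldr max 0
  | a :: l, h => by
    rcases List.mem_cons.mp h with rfl | h
    · exact le_max_left _ _
    · exact le_trans (le_foldr_max h) (le_max_right _ _)

/-- Extraction: commuting block subsequence, also commuting with a fixed finite set. -/
lemma extraction (hFC : ∀ g : G, (Set.range fun x : G => x * g * x⁻¹).Finite)
    (y : ℕ → G) (Z : Finset G) :
    ∃ w : ℕ → G, (∀ a b, Commute (w a) (w b)) ∧ (∀ n, ∀ z ∈ Z, Commute (w n) z) ∧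
      (∀ F : Finset ℕ, F.Nonempty → prodDec F w ∈ FPL y) := by
  classical
  -- the set of constraints accumulated from a history of blocks
  set Zl : List (ℕ × ℕ) → Finset G :=
    fun l => Z ∪ (l.map fun p => prodDec (Finset.Ico p.1 p.2) y).toFinset with hZl
  set sl : List (ℕ × ℕ) → ℕ := fun l => (l.map Prod.snd).foldr max 0 with hsl
  have spec : ∀ l : List (ℕ × ℕ), ∃ q : ℕ × ℕ, sl l ≤ q.1 ∧ q.1 < q.2 ∧
      ∀ z ∈ Zl l, Commute (prodDec (Finset.Ico q.1 q.2) y) z := by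
    intro l
    obtain ⟨a, b, h1, h2, h3⟩ := blockStep hFC y (Zl l) (sl l)
    exact ⟨(a, b), h1, h2, h3⟩
  set pick : List (ℕ × ℕ) → ℕ × ℕ := fun l => (spec l).choose with hpick
  set f : ℕ → List (ℕ × ℕ) := fun n => Nat.rec [] (fun _ ih => ih ++ [pick ih]) n with hff
  have hfsucc : ∀ n, f (n + 1) = f n ++ [pick (f n)] := fun n => rfl
  set blk : ℕ → ℕ × ℕ := fun k => pick (f k) with hblk
  set w : ℕ → G := fun k => prodDec (Finset.Ico (blk k).1 (blk k).2) y with hw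
  have hfeq : ∀ k, f k = (List.range k).map blk := by
    intro k
    induction k with
    | zero => rfl
    | succ k ih => rw [hfsucc, List.range_succ, List.map_append, ← ih]; rfl
  have hspec : ∀ k, sl (f k) ≤ (blk k).1 ∧ (blk k).1 < (blk k).2 ∧
      ∀ z ∈ Zl (f k), Commute (w k) z := fun k => (spec (f k)).choose_spec
  have hmemZl : ∀ t k, t < k → w t ∈ Zl (f k) := by
    intro t k htk
    rw [hZl]
    refine Finset.mem_union_right _ ?_
    rw [List.mem_toFinset]
    refine List.mem_map.mpr ⟨blk t, ?_, rfl⟩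
    rw [hfeq k]
    exact List.mem_map.mpr ⟨t, List.mem_range.mpr htk, rfl⟩
  have hZmem : ∀ k, ∀ z ∈ Z, z ∈ Zl (f k) := fun k z hz => Finset.mem_union_left _ hz
  have hlt : ∀ t k, t < k → (blk t).2 ≤ (blk k).1 := by
    intro t k htk
    refine le_trans ?_ (hspec k).1
    rw [hsl]
    refine le_foldr_max ?_
    refine List.mem_map.mpr ⟨blk t, ?_, rfl⟩
    rw [hfeq k]
    exact List.mem_map.mpr ⟨t, List.mem_range.mpr htk, rfl⟩
  have hcomm : ∀ a b, Commute (w a) (w b) := by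
    have h1 : ∀ t k, t < k → Commute (w k) (w t) :=
      fun t k htk => (hspec k).2.2 _ (hmemZl t k htk)
    intro a b
    rcases lt_trichotomy a b with h | rfl | h
    · exact (h1 a b h).symm
    · rfl
    · exact h1 b a h
  refine ⟨w, hcomm, fun n z hz => (hspec n).2.2 z (hZmem n z hz), ?_⟩
  -- main: block products of w are block products of y
  have main : ∀ F : Finset ℕ, F = ∅ ∨ ∃ E : Finset ℕ, E.Nonempty ∧
      prodDec F w = prodDec E y ∧ ∀ e ∈ E, ∃ t ∈ F, e < (blk t).2 := by
    intro F
    induction F using Finset.induction_on_max with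
    | empty => exact Or.inl rfl
    | insert n s hns ih =>
      refine Or.inr ?_
      rcases ih with rfl | ⟨E, hEne, hEeq, hEbd⟩
      · refine ⟨Finset.Ico (blk n).1 (blk n).2, ?_, ?_, ?_⟩
        · exact ⟨(blk n).1, Finset.mem_Ico.mpr ⟨le_refl _, (hspec n).2.1⟩⟩
        · rw [show (insert n ∅ : Finset ℕ) = {n} from rfl, prodDec_singleton]
        · intro e he
          exact ⟨n, Finset.mem_insert_self _ _, (Finset.mem_Ico.mp he).2⟩
      · have hsep : ∀ i ∈ E, ∀ j ∈ Finset.Ico (blk n).1 (blk n).2, i < j := by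
          intro i hi j hj
          obtain ⟨t, ht, hit⟩ := hEbd i hi
          have : (blk t).2 ≤ (blk n).1 := hlt t n (hns t ht)
          have := (Finset.mem_Ico.mp hj).1
          omega
        refine ⟨E ∪ Finset.Ico (blk n).1 (blk n).2, ?_, ?_, ?_⟩
        · exact hEne.mono Finset.subset_union_left
        · rw [prodDec_union y hsep, prodDec_insert_max w hns, hEeq, hw]
        · intro e he
          rcases Finset.mem_union.mp he with he | he
          · obtain ⟨t, ht, h⟩ := hEbd e he
            exact ⟨t, Finset.mem_insert_of_mem ht, h⟩
          · exact ⟨n, Finset.mem_insert_self _ _, (Finset.mem_Ico.mp he).2⟩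
  intro F hFne
  rcases main F with rfl | ⟨E, hEne, hEeq, -⟩
  · exact absurd hFne (by simp)
  · exact ⟨E, hEne, hEeq⟩
end extraction

section tau
variable {G : Type*} [Group G] (m : ℕ)

/-- `tau m i g` has the first `i` coordinates equal to `g` and the rest `1`. -/
def tau (i : ℕ) (g : G) : Fin m → G := fun t => if (t : ℕ) < i then g else 1

lemma tau_mul (i : ℕ) (g h : G) : tau m i (g * h) = tau m i g * tau m i h := by
  funext t
  simp only [tau, Pi.mul_apply]
  split <;> simp

lemma tau_one (i : ℕ) : tau m i (1 : G) = 1 := by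
  funext t; simp [tau]

lemma tau_zero (g : G) : tau m 0 g = 1 := by
  funext t; simp [tau]

lemma cornerPt_eq_mul_tau (x : Fin m → G) (g : G) (i : ℕ) :
    cornerPt x g i = x * tau m i g := by
  funext t
  simp only [cornerPt, Pi.mul_apply, tau]
  split <;> simp

lemma commute_tau {g h : G} (hc : Commute g h) (a b : ℕ) :
    Commute (tau m a g) (tau m b h) := by
  funext t
  simp only [Pi.mul_apply, tau]
  split <;> split <;> simp [hc.eq]

lemma commute_tau_right {g : G} {k : Fin m → G} (hc : ∀ t, Commute g (k t)) (a : ℕ) :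
    tau m a g * k = k * tau m a g := by
  funext t
  simp only [Pi.mul_apply, tau]
  split
  · exact (hc t).eq
  · simp

/-- Core list computation: pulling the wildcard factors out of a decreasing product. -/
lemma CLL {w' : ℕ → G} (hcomm : ∀ a b, Commute (w' a) (w' b)) :
    ∀ (L : List ℕ), L.Pairwise (· > ·) → ∀ (F : Finset ℕ) (v : ℕ → ℕ) (i : ℕ),
    (∀ n ∈ F, n ∈ L ∧ v n = i) →
    (L.map fun n => tau m (v n) (w' n)).prod
      = (L.map fun n => tau m (if n ∈ F then 0 else v n) (w' n)).prod * tau m i (prodDec F w') := by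
  intro L
  induction L with
  | nil =>
    intro _ F v i hF
    have : F = ∅ := by
      ext a; simp only [Finset.notMem_empty, iff_false]
      intro ha
      exact absurd (hF a ha).1 (List.not_mem_nil (a := a))
    simp [this, prodDec_empty', tau_one]
  | cons n L ih =>
    intro hL F v i hF
    classical
    have hLtail := (List.pairwise_cons.mp hL).2
    have hhead := (List.pairwise_cons.mp hL).1
    have hnodup : n ∉ L := fun h => lt_irrefl n (hhead n h)
    simp only [List.map_cons, List.prod_cons]
    by_cases hn : n ∈ F
    · -- wildcard position
      set F' := F.erase n with hF'
      have hFins : F = insert n F' := by rw [hF', Finset.insert_erase hn]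
      have hF'mem : ∀ a ∈ F', a ∈ L ∧ v a = i := by
        intro a ha
        have haF : a ∈ F := Finset.mem_of_mem_erase ha
        have hane : a ≠ n := Finset.ne_of_mem_erase ha
        refine ⟨?_, (hF a haF).2⟩
        rcases List.mem_cons.mp (hF a haF).1 with h | h
        · exact absurd h hane
        · exact h
      have htzcongr : (L.map fun n' => tau m (if n' ∈ F' then 0 else v n') (w' n'))
          = L.map fun n' => tau m (if n' ∈ F then 0 else v n') (w' n') := by
        refine List.map_congr_left ?_
        intro a ha
        have hane : a ≠ n := fun h => hnodup (h ▸ ha)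
        have : (a ∈ F') ↔ (a ∈ F) := by
          simp [hF', Finset.mem_erase, hane]
        rw [if_congr this rfl rfl]
      rw [ih hLtail F' v i hF'mem, htzcongr]
      have hvn : v n = i := (hF n hn).2
      have hcomm2 : Commute (tau m i (w' n))
          ((L.map fun n' => tau m (if n' ∈ F then 0 else v n') (w' n')).prod) := by
        refine Commute.list_prod_right _ _ ?_
        intro x hx
        obtain ⟨n', _, rfl⟩ := List.mem_map.mp hx
        exact commute_tau m (hcomm n n') _ _
      have hmax : ∀ a ∈ F', a < n := fun a ha => hhead a (hF'mem a ha).1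
      rw [hvn, if_pos hn, tau_zero, one_mul, ← mul_assoc, hcomm2.eq, mul_assoc,
        ← tau_mul, ← prodDec_insert_max w' hmax, ← hFins]
    · -- fixed position
      have hFtail : ∀ a ∈ F, a ∈ L ∧ v a = i := by
        intro a ha
        refine ⟨?_, (hF a ha).2⟩
        rcases List.mem_cons.mp (hF a ha).1 with h | h
        · exact absurd (h ▸ ha) hn
        · exact h
      rw [ih hLtail F v i hFtail, if_neg hn, ← mul_assoc]


end tau

/-- IP-van der Waerden theorem for FC-groups: if `G` is a countable discrete FC-group
and `G^m = C₁ ∪ ⋯ ∪ C_r` is a finite partition, then for some `j` the set of `g` such that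
some corner configuration `{x, (x₁g,x₂,…), (x₁g,x₂g,…), …, (x₁g,…,x_mg)}` lies in `C_j`
is left IP*. -/
theorem stmt19 {G : Type*} [Group G] [Countable G]
    (hFC : ∀ g : G, (Set.range fun x : G => x * g * x⁻¹).Finite)
    (m : ℕ) (r : ℕ) (C : Fin r → Set (Fin m → G))
    (hcov : ∀ z : Fin m → G, ∃ j, z ∈ C j) :
    ∃ j, leftIPStar { g : G | ∃ x : Fin m → G, ∀ i ≤ m, cornerPt x g i ∈ C j } := by
  classical
  letI : TopologicalSpace (Fin r) := ⊥
  haveI : DiscreteTopology (Fin r) := ⟨rfl⟩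
  set c : (Fin m → G) → Fin r := fun γ => (hcov γ).choose with hcdef
  have hc : ∀ γ, γ ∈ C (c γ) := fun γ => (hcov γ).choose_spec
  set T : (Fin m → G) → ((Fin m → G) → Fin r) → ((Fin m → G) → Fin r) :=
    fun a χ γ => χ (a * γ) with hTdef
  have hTcont : ∀ a, Continuous (T a) := fun a => continuous_pi fun γ => continuous_apply (a * γ)
  have hTT : ∀ a b (χ : (Fin m → G) → Fin r), T a (T b χ) = T (b * a) χ := by
    intro a b χ; funext γ; simp [hTdef, mul_assoc]
  set X : Set ((Fin m → G) → Fin r) := closure (Set.range fun a => T a c) with hXdef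
  have hXcl : IsClosed X := isClosed_closure
  have hXne : X.Nonempty := ⟨T 1 c, subset_closure ⟨1, rfl⟩⟩
  have hXinv : ∀ a, T a '' X ⊆ X := by
    intro a
    have h1 : T a '' (Set.range fun b => T b c) ⊆ Set.range fun b => T b c := by
      rintro _ ⟨_, ⟨b, rfl⟩, rfl⟩; exact ⟨b * a, (hTT a b c).symm⟩
    calc T a '' X ⊆ closure (T a '' (Set.range fun b => T b c)) :=
          image_closure_subset_closure_image (hTcont a)
      _ ⊆ X := closure_mono h1
  set S : Set (Set ((Fin m → G) → Fin r)) :=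
    {Y | Y ⊆ X ∧ Y.Nonempty ∧ IsClosed Y ∧ ∀ a, T a '' Y ⊆ Y} with hSdef
  have hXS : X ∈ S := ⟨subset_rfl, hXne, hXcl, hXinv⟩
  have hchain : ∀ ch ⊆ S, IsChain (· ⊆ ·) ch → ch.Nonempty →
      ∃ lb ∈ S, ∀ s ∈ ch, lb ⊆ s := by
    intro ch hchS hch hchne
    refine ⟨⋂₀ ch, ⟨?_, ?_, ?_, ?_⟩, fun s hs => Set.sInter_subset_of_mem hs⟩
    · obtain ⟨s₀, hs₀⟩ := hchne
      exact (Set.sInter_subset_of_mem hs₀).trans (hchS hs₀).1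
    · haveI : Nonempty ch := hchne.to_subtype
      apply IsCompact.nonempty_sInter_of_directed_nonempty_isCompact_isClosed
      · intro x hx y hy
        rcases hch.total hx hy with h | h
        · exact ⟨x, hx, subset_rfl, h⟩
        · exact ⟨y, hy, h, subset_rfl⟩
      · exact fun U hU => (hchS hU).2.1
      · exact fun U hU => (hchS hU).2.2.1.isCompact
      · exact fun U hU => (hchS hU).2.2.1
    · exact isClosed_sInter fun U hU => (hchS hU).2.2.1
    · intro a
      rintro _ ⟨χ, hχ, rfl⟩
      intro U hU
      exact (hchS hU).2.2.2 a ⟨χ, hχ U hU, rfl⟩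
  obtain ⟨Y₀, -, hY₀min⟩ := zorn_superset_nonempty S hchain X hXS
  have hY₀S : Y₀ ∈ S := hY₀min.1
  obtain ⟨ω₀, hω₀⟩ := hY₀S.2.1
  have hYinv := hY₀S.2.2.2
  set j : Fin r := ω₀ 1 with hjdef
  refine ⟨j, ?_⟩
  have hopen : ∀ γ : Fin m → G, IsOpen {χ : (Fin m → G) → Fin r | χ γ = j} := by
    intro γ
    show IsOpen ((fun χ : (Fin m → G) → Fin r => χ γ) ⁻¹' ({j} : Set (Fin r)))
    exact (continuous_apply γ).isOpen_preimage _ (isOpen_discrete _)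
  -- every point of Y₀ takes the value j somewhere
  have horbit : ∀ χ ∈ Y₀, ∃ a, χ a = j := by
    intro χ hχ
    have h1 : ∀ a, T a χ ∈ Y₀ := fun a => hYinv a ⟨χ, hχ, rfl⟩
    have hY'S : closure (Set.range fun a => T a χ) ∈ S := by
      have hsub : Set.range (fun a => T a χ) ⊆ Y₀ := by rintro _ ⟨a, rfl⟩; exact h1 a
      have hclsub : closure (Set.range fun a => T a χ) ⊆ Y₀ :=
        closure_minimal hsub hY₀S.2.2.1
      refine ⟨hclsub.trans hY₀S.1, ⟨T 1 χ, subset_closure ⟨1, rfl⟩⟩, isClosed_closure, ?_⟩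
      intro a
      have h2 : T a '' (Set.range fun b => T b χ) ⊆ Set.range fun b => T b χ := by
        rintro _ ⟨_, ⟨b, rfl⟩, rfl⟩; exact ⟨b * a, (hTT a b χ).symm⟩
      calc T a '' closure (Set.range fun b => T b χ)
          ⊆ closure (T a '' (Set.range fun b => T b χ)) :=
            image_closure_subset_closure_image (hTcont a)
        _ ⊆ closure (Set.range fun b => T b χ) := closure_mono h2
    have hY'sub : closure (Set.range fun a => T a χ) ⊆ Y₀ :=
      closure_minimal (by rintro _ ⟨a, rfl⟩; exact h1 a) hY₀S.2.2.1
    have hback : Y₀ ⊆ closure (Set.range fun a => T a χ) := hY₀min.2 hY'S hY'sub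
    have hω₀Y' : ω₀ ∈ closure (Set.range fun a => T a χ) := hback hω₀
    rw [mem_closure_iff] at hω₀Y'
    have hUo : IsOpen {ψ : (Fin m → G) → Fin r | ψ 1 = j} := hopen 1
    obtain ⟨_, hU, a, rfl⟩ := hω₀Y' _ hUo hjdef.symm
    exact ⟨a * 1, hU⟩
  -- compactness: finitely many return positions suffice
  have hY₀cpt : IsCompact Y₀ := hY₀S.2.2.1.isCompact
  have hcover : Y₀ ⊆ ⋃ a : Fin m → G, {χ : (Fin m → G) → Fin r | χ a = j} := by
    intro χ hχ
    obtain ⟨a, ha⟩ := horbit χ hχ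
    exact Set.mem_iUnion.mpr ⟨a, ha⟩
  obtain ⟨K, hK⟩ := hY₀cpt.elim_finite_subcover
    (fun a : Fin m → G => {χ : (Fin m → G) → Fin r | χ a = j})
    (fun a => hopen a) hcover
  have hsynd : ∀ γ : Fin m → G, ∃ k ∈ K, ω₀ (γ * k) = j := by
    intro γ
    have h1 : T γ ω₀ ∈ Y₀ := hYinv γ ⟨ω₀, hω₀, rfl⟩
    obtain ⟨k, hkK, hk⟩ := Set.mem_iUnion₂.mp (hK h1)
    exact ⟨k, hkK, hk⟩
  -- now handle an arbitrary sequence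
  intro y
  set Z : Finset G := K.biUnion fun k => Finset.image k Finset.univ with hZdef
  obtain ⟨w', hwcomm, hwZ, hwFPL⟩ := extraction hFC y Z
  obtain ⟨ι, hι, hHJ⟩ :=
    Combinatorics.Line.exists_mono_in_high_dimension (Fin (m + 1)) {k : Fin m → G // k ∈ K}
  set N : ℕ := Fintype.card ι with hNdef
  set e : ι ≃ Fin N := Fintype.equivFin ι with hedef
  set Wext : (ι → Fin (m + 1)) → ℕ → ℕ :=
    fun u n => if h : n < N then (u (e.symm ⟨n, h⟩) : ℕ) else 0 with hWdef
  set Φ : (ℕ → ℕ) → (Fin m → G) :=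
    fun v => ((List.range N).reverse.map fun n => tau m (v n) (w' n)).prod with hΦdef
  set Ccol : (ι → Fin (m + 1)) → {k : Fin m → G // k ∈ K} :=
    fun u => ⟨(hsynd (Φ (Wext u))).choose, (hsynd (Φ (Wext u))).choose_spec.1⟩ with hCcol
  have hCcolspec : ∀ u, ω₀ (Φ (Wext u) * (Ccol u).1) = j :=
    fun u => (hsynd (Φ (Wext u))).choose_spec.2
  obtain ⟨l, c₀, hc₀⟩ := hHJ Ccol
  set k₀ : Fin m → G := c₀.1 with hk₀def
  have key : ∀ x : Fin (m + 1), ω₀ (Φ (Wext (l x)) * k₀) = j := by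
    intro x
    have h1 := hCcolspec (l x)
    rw [hc₀ x] at h1
    exact h1
  -- the wildcard set
  set F : Finset ℕ :=
    (Finset.range N).filter (fun n => ∃ h : n < N, l.idxFun (e.symm ⟨n, h⟩) = none) with hFdef
  set g : G := prodDec F w' with hgdef
  have hFne : F.Nonempty := by
    obtain ⟨i0, hi0⟩ := l.proper
    refine ⟨(e i0 : ℕ), Finset.mem_filter.mpr ⟨Finset.mem_range.mpr (e i0).2, (e i0).2, ?_⟩⟩
    rw [show (⟨((e i0) : ℕ), (e i0).2⟩ : Fin N) = e i0 from Fin.eta _ _, Equiv.symm_apply_apply]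
    exact hi0
  have hg : g ∈ FPL y := hwFPL F hFne
  -- sortedness of the index list
  have hLsort : ((List.range N).reverse).Pairwise (· > ·) := by
    rw [List.pairwise_reverse]
    exact List.pairwise_lt_range (n := N)
  -- the key product identity
  have hprod : ∀ x : Fin (m + 1), Φ (Wext (l x)) = Φ (Wext (l 0)) * tau m (x : ℕ) g := by
    intro x
    have hcond : ∀ n ∈ F, n ∈ (List.range N).reverse ∧ Wext (l x) n = (x : ℕ) := by
      intro n hn
      obtain ⟨hnr, hN, hnone⟩ := Finset.mem_filter.mp hn
      refine ⟨by rw [List.mem_reverse]; exact List.mem_range.mpr hN, ?_⟩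
      rw [hWdef]
      simp only [dif_pos hN]
      simp only [Combinatorics.Line.coe_apply, hnone, Option.getD_none]
    have hx := CLL m hwcomm ((List.range N).reverse) hLsort F (Wext (l x)) (x : ℕ) hcond
    have h0 : ∀ n ∈ (List.range N).reverse,
        tau m (if n ∈ F then 0 else Wext (l x) n) (w' n) = tau m (Wext (l 0) n) (w' n) := by
      intro n hnL
      have hN : n < N := List.mem_range.mp (List.mem_reverse.mp hnL)
      by_cases hnF : n ∈ F
      · rw [if_pos hnF]
        obtain ⟨-, hN', hnone⟩ := Finset.mem_filter.mp hnF
        rw [hWdef]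
        simp only [dif_pos hN]
        simp only [Combinatorics.Line.coe_apply, hnone, Option.getD_none]
        rfl
      · rw [if_neg hnF]
        have hnotnone : ¬ (l.idxFun (e.symm ⟨n, hN⟩) = none) := by
          intro hcontra
          exact hnF (Finset.mem_filter.mpr ⟨Finset.mem_range.mpr hN, hN, hcontra⟩)
        obtain ⟨a, ha⟩ := Option.ne_none_iff_exists'.mp hnotnone
        rw [hWdef]
        simp only [dif_pos hN]
        simp only [Combinatorics.Line.coe_apply, ha, Option.getD_some]
    have hmapeq : ((List.range N).reverse.map fun n =>
        tau m (if n ∈ F then 0 else Wext (l x) n) (w' n))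
        = ((List.range N).reverse.map fun n => tau m (Wext (l 0) n) (w' n)) :=
      List.map_congr_left h0
    rw [hΦdef]
    simp only []
    rw [hx, hmapeq]
  -- g commutes with the coordinates of k₀
  have hk₀Z : ∀ t : Fin m, k₀ t ∈ Z := by
    intro t
    exact Finset.mem_biUnion.mpr ⟨c₀.1, c₀.2, Finset.mem_image.mpr ⟨t, Finset.mem_univ t, rfl⟩⟩
  have hgk : ∀ t : Fin m, Commute g (k₀ t) := by
    intro t
    rw [hgdef]
    unfold prodDec
    refine ((Commute.list_prod_right _ _ ?_)).symm
    intro xx hxx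
    obtain ⟨n', -, rfl⟩ := List.mem_map.mp hxx
    exact (hwZ n' (k₀ t) (hk₀Z t)).symm
  have hcomm_tau_k : ∀ i : ℕ, tau m i g * k₀ = k₀ * tau m i g :=
    fun i => commute_tau_right m hgk i
  -- final corner values
  have hfinal : ∀ x : Fin (m + 1), ω₀ (Φ (Wext (l 0)) * k₀ * tau m (x : ℕ) g) = j := by
    intro x
    have h1 := key x
    rw [hprod x, mul_assoc, hcomm_tau_k, ← mul_assoc] at h1
    exact h1
  -- transfer back to c
  set a' : Fin m → G := Φ (Wext (l 0)) * k₀ with ha'def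
  have hω₀X : ω₀ ∈ X := hY₀S.1 hω₀
  rw [mem_closure_iff] at hω₀X
  have hVo : IsOpen (⋂ i ∈ Finset.range (m + 1),
      {χ : (Fin m → G) → Fin r | χ (a' * tau m i g) = j}) := by
    exact isOpen_biInter_finset fun i _ => hopen (a' * tau m i g)
  have hω₀V : ω₀ ∈ ⋂ i ∈ Finset.range (m + 1),
      {χ : (Fin m → G) → Fin r | χ (a' * tau m i g) = j} := by
    refine Set.mem_iInter₂.mpr fun i hi => ?_
    have hilt : i < m + 1 := Finset.mem_range.mp hi
    have := hfinal ⟨i, hilt⟩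
    simpa [ha'def] using this
  obtain ⟨_, hV, b, rfl⟩ := hω₀X _ hVo hω₀V
  refine ⟨g, ⟨b * a', ?_⟩, hg⟩
  intro i hi
  have hiV := Set.mem_iInter₂.mp hV i (Finset.mem_range.mpr (Nat.lt_succ_of_le hi))
  -- hiV : (T b c) (a' * tau m i g) = j, i.e. c (b * (a' * tau m i g)) = j
  have hcj : c (b * (a' * tau m i g)) = j := hiV
  have := hc (b * (a' * tau m i g))
  rw [hcj] at this
  rw [cornerPt_eq_mul_tau m (b * a') g i, mul_assoc]
  exact this
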